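/- Suppose the homogeneous action-degree structure is as follows: g^{(j)} has only monomials of action-degree with the same parity as j (degree j pure-action terms, and angle-dependent terms of action degrees j−2, j−4, …, down to 0 or 1). If the generating function χ is purely trigonometric (action degree 0) then L_χ maps a term of action degree d and 'order index' j to one of action degree d−1, i.e. it flips the parity of the action degree; if χ is homogeneous of action degree 1, L_χ preserves the action degree and hence the parity. Consequently, in the normalization algorithm alternating action-degree-0 and action-degree-1 generating functions, every function g^{(j,r)} at any normalization step r retains the parity structure: even j contains only even action degrees, odd j only odd action degrees. -/

import Mathlib

/-- Poisson bracket for canonical pairs (P,p), (Q,q) of functions of (P,Q,p,q). -/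
noncomputable def pb (F G : ℝ → ℝ → ℝ → ℝ → ℂ) : ℝ → ℝ → ℝ → ℝ → ℂ :=
  fun P Q p q =>
    deriv (fun x => F P Q x q) p * deriv (fun x => G x Q p q) P
  - deriv (fun x => F x Q p q) P * deriv (fun x => G P Q x q) p
  + deriv (fun x => F P Q p x) q * deriv (fun x => G P x p q) Q
  - deriv (fun x => F P x p q) Q * deriv (fun x => G P Q p x) q

/-- A Fourier–Taylor monomial P^l₁ Q^l₂ e^{i(k₁ p + k₂ q)}. -/
noncomputable def monom (l : ℕ × ℕ) (k : ℤ × ℤ) : ℝ → ℝ → ℝ → ℝ → ℂ :=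
  fun P Q p q => (P : ℂ) ^ l.1 * (Q : ℂ) ^ l.2 *
    Complex.exp (Complex.I * ((k.1 : ℂ) * (p : ℂ) + (k.2 : ℂ) * (q : ℂ)))

open Complex Finset

lemma hasDerivP (l : ℕ × ℕ) (k : ℤ × ℤ) (P Q p q : ℝ) :
    HasDerivAt (fun x : ℝ => monom l k x Q p q)
      ((l.1 : ℂ) * monom (l.1 - 1, l.2) k P Q p q) P := by
  have h := (((hasDerivAt_pow l.1 ((P : ℝ) : ℂ)).mul_const
      ((Q : ℂ) ^ l.2 * Complex.exp (Complex.I * ((k.1 : ℂ) * (p : ℂ) + (k.2 : ℂ) * (q : ℂ))))).comp_ofReal)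
  convert h using 1
  · funext x; simp [monom]; ring
  · simp [monom]; ring

lemma hasDerivQ (l : ℕ × ℕ) (k : ℤ × ℤ) (P Q p q : ℝ) :
    HasDerivAt (fun x : ℝ => monom l k P x p q)
      ((l.2 : ℂ) * monom (l.1, l.2 - 1) k P Q p q) Q := by
  have h := ((((hasDerivAt_pow l.2 ((Q : ℝ) : ℂ)).const_mul ((P:ℂ)^l.1)).mul_const
      (Complex.exp (Complex.I * ((k.1 : ℂ) * (p : ℝ) + (k.2 : ℂ) * (q : ℂ))))).comp_ofReal)
  convert h using 1
  · simp [monom]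
  · simp [monom]; ring

lemma hasDerivp (l : ℕ × ℕ) (k : ℤ × ℤ) (P Q p q : ℝ) :
    HasDerivAt (fun x : ℝ => monom l k P Q x q)
      (Complex.I * (k.1 : ℂ) * monom l k P Q p q) p := by
  have h1 : HasDerivAt (fun z : ℂ => Complex.exp (Complex.I * ((k.1 : ℂ) * z + (k.2 : ℂ) * (q : ℂ))))
      (Complex.I * (k.1 : ℂ) * Complex.exp (Complex.I * ((k.1 : ℂ) * (p : ℂ) + (k.2 : ℂ) * (q : ℂ)))) (p : ℂ) := by
    have := (((((hasDerivAt_id' ((p:ℝ):ℂ))).const_mul (k.1:ℂ)).add_const ((k.2:ℂ)*(q:ℂ))).const_mul Complex.I).cexp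
    exact this.congr_deriv (by ring)
  have h := (h1.comp_ofReal).const_mul ((P:ℂ)^l.1 * (Q:ℂ)^l.2)
  refine h.congr_deriv ?_
  · simp [monom]; ring

lemma hasDerivq (l : ℕ × ℕ) (k : ℤ × ℤ) (P Q p q : ℝ) :
    HasDerivAt (fun x : ℝ => monom l k P Q p x)
      (Complex.I * (k.2 : ℂ) * monom l k P Q p q) q := by
  have h1 : HasDerivAt (fun z : ℂ => Complex.exp (Complex.I * ((k.1 : ℂ) * (p:ℂ) + (k.2 : ℂ) * z)))
      (Complex.I * (k.2 : ℂ) * Complex.exp (Complex.I * ((k.1 : ℂ) * (p : ℂ) + (k.2 : ℂ) * (q : ℂ)))) (q : ℂ) := by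
    have := ((((((hasDerivAt_id' ((q:ℝ):ℂ))).const_mul (k.2:ℂ)).const_add ((k.1:ℂ)*(p:ℂ))).const_mul Complex.I)).cexp
    exact this.congr_deriv (by ring)
  have h := (h1.comp_ofReal).const_mul ((P:ℂ)^l.1 * (Q:ℂ)^l.2)
  refine h.congr_deriv ?_
  · simp [monom]; ring

/-- pb of two monomials, closed form. -/
lemma pb_monom (l l' : ℕ × ℕ) (k k' : ℤ × ℤ) :
    pb (monom l k) (monom l' k') = fun P Q p q =>
      (Complex.I * (k.1:ℂ) * (l'.1:ℂ)) *
        monom (l.1 + (l'.1 - 1), l.2 + l'.2) (k.1 + k'.1, k.2 + k'.2) P Q p q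
    + (-(Complex.I * (k'.1:ℂ) * (l.1:ℂ))) *
        monom ((l.1 - 1) + l'.1, l.2 + l'.2) (k.1 + k'.1, k.2 + k'.2) P Q p q
    + (Complex.I * (k.2:ℂ) * (l'.2:ℂ)) *
        monom (l.1 + l'.1, l.2 + (l'.2 - 1)) (k.1 + k'.1, k.2 + k'.2) P Q p q
    + (-(Complex.I * (k'.2:ℂ) * (l.2:ℂ))) *
        monom (l.1 + l'.1, (l.2 - 1) + l'.2) (k.1 + k'.1, k.2 + k'.2) P Q p q := by
  funext P Q p q
  simp only [pb, (hasDerivP l k P Q p q).deriv, (hasDerivQ l k P Q p q).deriv,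
    (hasDerivp l k P Q p q).deriv, (hasDerivq l k P Q p q).deriv,
    (hasDerivP l' k' P Q p q).deriv, (hasDerivQ l' k' P Q p q).deriv,
    (hasDerivp l' k' P Q p q).deriv, (hasDerivq l' k' P Q p q).deriv]
  simp only [monom, pow_add]
  push_cast
  rw [show Complex.I * (((k.1:ℂ) + k'.1) * p + ((k.2:ℂ) + k'.2) * q)
      = Complex.I * ((k.1:ℂ) * p + (k.2:ℂ) * q) + Complex.I * ((k'.1:ℂ) * p + (k'.2:ℂ) * q) by ring,
    Complex.exp_add]
  ring

/-- F is a combination of monomials of action-degree parity m. -/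
def Good (m : ℕ) (F : ℝ → ℝ → ℝ → ℝ → ℂ) : Prop :=
  ∃ (S : Finset ((ℕ × ℕ) × (ℤ × ℤ))) (d : (ℕ × ℕ) × (ℤ × ℤ) → ℂ),
    (∀ lk ∈ S, (lk.1.1 + lk.1.2) % 2 = m) ∧
    F = fun P Q p q => ∑ lk ∈ S, d lk * monom lk.1 lk.2 P Q p q

lemma good_zero (m : ℕ) : Good m (fun _ _ _ _ => (0:ℂ)) :=
  ⟨∅, fun _ => 0, by simp, by simp⟩

lemma good_add {m : ℕ} {F G : ℝ → ℝ → ℝ → ℝ → ℂ} (hF : Good m F) (hG : Good m G) :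
    Good m (fun P Q p q => F P Q p q + G P Q p q) := by
  obtain ⟨S₁, d₁, h₁, e₁⟩ := hF
  obtain ⟨S₂, d₂, h₂, e₂⟩ := hG
  refine ⟨S₁ ∪ S₂,
    fun lk => (if lk ∈ S₁ then d₁ lk else 0) + (if lk ∈ S₂ then d₂ lk else 0), ?_, ?_⟩
  · intro lk hlk
    rcases Finset.mem_union.1 hlk with h | h
    exacts [h₁ lk h, h₂ lk h]
  · funext P Q p q
    rw [e₁, e₂]
    simp only [add_mul, Finset.sum_add_distrib, ite_mul, zero_mul]
    rw [Finset.sum_ite_mem, Finset.sum_ite_mem,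
      Finset.union_inter_cancel_left, Finset.union_inter_cancel_right]

lemma good_term (m : ℕ) (a : ℂ) (l : ℕ × ℕ) (k : ℤ × ℤ)
    (h : a = 0 ∨ (l.1 + l.2) % 2 = m) :
    Good m (fun P Q p q => a * monom l k P Q p q) := by
  rcases h with h | h
  · subst h; simpa using good_zero m
  · exact ⟨{(l, k)}, fun _ => a, by simpa using h, by simp⟩

lemma good_sum {m : ℕ} {ι : Type*} (s : Finset ι) (F : ι → ℝ → ℝ → ℝ → ℝ → ℂ)
    (h : ∀ i ∈ s, Good m (F i)) :
    Good m (fun P Q p q => ∑ i ∈ s, F i P Q p q) := by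
  classical
  induction s using Finset.induction with
  | empty => simpa using good_zero m
  | @insert a s hnotmem ih =>
    simp only [Finset.sum_insert hnotmem]
    exact good_add (h a (Finset.mem_insert_self a s))
      (ih fun i hi => h i (Finset.mem_insert_of_mem hi))

lemma good_const_mul {m : ℕ} {F : ℝ → ℝ → ℝ → ℝ → ℂ} (a : ℂ) (hF : Good m F) :
    Good m (fun P Q p q => a * F P Q p q) := by
  obtain ⟨S, d, h, e⟩ := hF
  refine ⟨S, fun lk => a * d lk, h, ?_⟩
  funext P Q p q
  rw [e]
  rw [Finset.mul_sum]
  simp [mul_assoc]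

section Bilinear
variable {ι κ : Type*}

lemma pb_sums (S₁ : Finset ι) (S₂ : Finset κ) (c₁ : ι → ℂ) (c₂ : κ → ℂ)
    (L₁ : ι → ℕ × ℕ) (K₁ : ι → ℤ × ℤ) (L₂ : κ → ℕ × ℕ) (K₂ : κ → ℤ × ℤ) :
    pb (fun P Q p q => ∑ i ∈ S₁, c₁ i * monom (L₁ i) (K₁ i) P Q p q)
       (fun P Q p q => ∑ j ∈ S₂, c₂ j * monom (L₂ j) (K₂ j) P Q p q)
    = fun P Q p q => ∑ i ∈ S₁, ∑ j ∈ S₂,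
        (c₁ i * c₂ j) * pb (monom (L₁ i) (K₁ i)) (monom (L₂ j) (K₂ j)) P Q p q := by
  funext P Q p q
  have dP : ∀ (s : Finset ι) (c : ι → ℂ) (L : ι → ℕ × ℕ) (K : ι → ℤ × ℤ),
      deriv (fun x : ℝ => ∑ i ∈ s, c i * monom (L i) (K i) x Q p q) P
      = ∑ i ∈ s, c i * ((((L i).1 : ℂ)) * monom ((L i).1 - 1, (L i).2) (K i) P Q p q) :=
    fun s c L K => (HasDerivAt.fun_sum fun i _ => ((hasDerivP (L i) (K i) P Q p q).const_mul (c i))).deriv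
  have dQ : ∀ (s : Finset ι) (c : ι → ℂ) (L : ι → ℕ × ℕ) (K : ι → ℤ × ℤ),
      deriv (fun x : ℝ => ∑ i ∈ s, c i * monom (L i) (K i) P x p q) Q
      = ∑ i ∈ s, c i * ((((L i).2 : ℂ)) * monom ((L i).1, (L i).2 - 1) (K i) P Q p q) :=
    fun s c L K => (HasDerivAt.fun_sum fun i _ => ((hasDerivQ (L i) (K i) P Q p q).const_mul (c i))).deriv
  have dp : ∀ (s : Finset ι) (c : ι → ℂ) (L : ι → ℕ × ℕ) (K : ι → ℤ × ℤ),
      deriv (fun x : ℝ => ∑ i ∈ s, c i * monom (L i) (K i) P Q x q) p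
      = ∑ i ∈ s, c i * (Complex.I * (((K i).1 : ℂ)) * monom (L i) (K i) P Q p q) :=
    fun s c L K => (HasDerivAt.fun_sum fun i _ => ((hasDerivp (L i) (K i) P Q p q).const_mul (c i))).deriv
  have dq : ∀ (s : Finset ι) (c : ι → ℂ) (L : ι → ℕ × ℕ) (K : ι → ℤ × ℤ),
      deriv (fun x : ℝ => ∑ i ∈ s, c i * monom (L i) (K i) P Q p x) q
      = ∑ i ∈ s, c i * (Complex.I * (((K i).2 : ℂ)) * monom (L i) (K i) P Q p q) :=
    fun s c L K => (HasDerivAt.fun_sum fun i _ => ((hasDerivq (L i) (K i) P Q p q).const_mul (c i))).deriv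
  have dP' : ∀ (s : Finset κ) (c : κ → ℂ) (L : κ → ℕ × ℕ) (K : κ → ℤ × ℤ),
      deriv (fun x : ℝ => ∑ i ∈ s, c i * monom (L i) (K i) x Q p q) P
      = ∑ i ∈ s, c i * ((((L i).1 : ℂ)) * monom ((L i).1 - 1, (L i).2) (K i) P Q p q) :=
    fun s c L K => (HasDerivAt.fun_sum fun i _ => ((hasDerivP (L i) (K i) P Q p q).const_mul (c i))).deriv
  have dQ' : ∀ (s : Finset κ) (c : κ → ℂ) (L : κ → ℕ × ℕ) (K : κ → ℤ × ℤ),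
      deriv (fun x : ℝ => ∑ i ∈ s, c i * monom (L i) (K i) P x p q) Q
      = ∑ i ∈ s, c i * ((((L i).2 : ℂ)) * monom ((L i).1, (L i).2 - 1) (K i) P Q p q) :=
    fun s c L K => (HasDerivAt.fun_sum fun i _ => ((hasDerivQ (L i) (K i) P Q p q).const_mul (c i))).deriv
  have dp' : ∀ (s : Finset κ) (c : κ → ℂ) (L : κ → ℕ × ℕ) (K : κ → ℤ × ℤ),
      deriv (fun x : ℝ => ∑ i ∈ s, c i * monom (L i) (K i) P Q x q) p
      = ∑ i ∈ s, c i * (Complex.I * (((K i).1 : ℂ)) * monom (L i) (K i) P Q p q) :=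
    fun s c L K => (HasDerivAt.fun_sum fun i _ => ((hasDerivp (L i) (K i) P Q p q).const_mul (c i))).deriv
  have dq' : ∀ (s : Finset κ) (c : κ → ℂ) (L : κ → ℕ × ℕ) (K : κ → ℤ × ℤ),
      deriv (fun x : ℝ => ∑ i ∈ s, c i * monom (L i) (K i) P Q p x) q
      = ∑ i ∈ s, c i * (Complex.I * (((K i).2 : ℂ)) * monom (L i) (K i) P Q p q) :=
    fun s c L K => (HasDerivAt.fun_sum fun i _ => ((hasDerivq (L i) (K i) P Q p q).const_mul (c i))).deriv
  simp only [pb, dP, dQ, dp, dq, dP', dQ', dp', dq',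
    (hasDerivP _ _ P Q p q).deriv, (hasDerivQ _ _ P Q p q).deriv,
    (hasDerivp _ _ P Q p q).deriv, (hasDerivq _ _ P Q p q).deriv]
  rw [Finset.sum_mul_sum, Finset.sum_mul_sum, Finset.sum_mul_sum, Finset.sum_mul_sum]
  rw [← Finset.sum_sub_distrib, ← Finset.sum_add_distrib, ← Finset.sum_sub_distrib]
  refine Finset.sum_congr rfl fun i _ => ?_
  rw [← Finset.sum_sub_distrib, ← Finset.sum_add_distrib, ← Finset.sum_sub_distrib]
  refine Finset.sum_congr rfl fun jx _ => ?_
  ring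

end Bilinear

lemma good_pb_trig (j : ℕ) (l : ℕ × ℕ) (k k' : ℤ × ℤ)
    (h : (l.1 + l.2) % 2 = j % 2) :
    Good ((j + 1) % 2) (pb (monom l k) (monom (0, 0) k')) := by
  rw [pb_monom]
  refine good_add (good_add (good_add ?_ ?_) ?_) ?_
  · exact good_term _ _ _ _ (Or.inl (by norm_num))
  · rcases Nat.eq_zero_or_pos l.1 with h0 | h0
    · exact good_term _ _ _ _ (Or.inl (by simp [h0]))
    · exact good_term _ _ _ _ (Or.inr (by simp only; omega))
  · exact good_term _ _ _ _ (Or.inl (by norm_num))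
  · rcases Nat.eq_zero_or_pos l.2 with h0 | h0
    · exact good_term _ _ _ _ (Or.inl (by simp [h0]))
    · exact good_term _ _ _ _ (Or.inr (by simp only; omega))

lemma good_pb_deg1 (j : ℕ) (l l' : ℕ × ℕ) (k k' : ℤ × ℤ)
    (h : (l.1 + l.2) % 2 = j % 2) (h1 : l'.1 + l'.2 = 1) :
    Good (j % 2) (pb (monom l k) (monom l' k')) := by
  rw [pb_monom]
  refine good_add (good_add (good_add ?_ ?_) ?_) ?_
  · rcases Nat.eq_zero_or_pos l'.1 with h0 | h0
    · exact good_term _ _ _ _ (Or.inl (by simp [h0]))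
    · exact good_term _ _ _ _ (Or.inr (by simp only; omega))
  · rcases Nat.eq_zero_or_pos l.1 with h0 | h0
    · exact good_term _ _ _ _ (Or.inl (by simp [h0]))
    · exact good_term _ _ _ _ (Or.inr (by simp only; omega))
  · rcases Nat.eq_zero_or_pos l'.2 with h0 | h0
    · exact good_term _ _ _ _ (Or.inl (by simp [h0]))
    · exact good_term _ _ _ _ (Or.inr (by simp only; omega))
  · rcases Nat.eq_zero_or_pos l.2 with h0 | h0
    · exact good_term _ _ _ _ (Or.inl (by simp [h0]))
    · exact good_term _ _ _ _ (Or.inr (by simp only; omega))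

/-- parity structure of the normalization algorithm. If f contains
only monomials whose action degree has the parity of j, then L_χ with a purely
trigonometric χ (action degree 0) flips the parity of the action degrees, while
L_χ with a χ homogeneous of action degree 1 preserves it. Hence the alternating
algorithm (trig generating functions at odd steps, degree-1 at even steps)
preserves the parity structure of every g^{(j,r)}. -/
theorem stmt16 (j : ℕ)
    (Sf : Finset ((ℕ × ℕ) × (ℤ × ℤ))) (c : (ℕ × ℕ) × (ℤ × ℤ) → ℂ)
    (hfpar : ∀ lk ∈ Sf, (lk.1.1 + lk.1.2) % 2 = j % 2)
    (Sχ₀ : Finset (ℤ × ℤ)) (x₀ : ℤ × ℤ → ℂ)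
    (Sχ₁ : Finset ((ℕ × ℕ) × (ℤ × ℤ))) (x₁ : (ℕ × ℕ) × (ℤ × ℤ) → ℂ)
    (hχ₁deg : ∀ lk ∈ Sχ₁, lk.1.1 + lk.1.2 = 1)
    (f χ₀ χ₁ : ℝ → ℝ → ℝ → ℝ → ℂ)
    (hf : f = fun P Q p q => ∑ lk ∈ Sf, c lk * monom lk.1 lk.2 P Q p q)
    (hχ₀ : χ₀ = fun P Q p q => ∑ k ∈ Sχ₀, x₀ k * monom (0, 0) k P Q p q)
    (hχ₁ : χ₁ = fun P Q p q => ∑ lk ∈ Sχ₁, x₁ lk * monom lk.1 lk.2 P Q p q) :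
    (∃ (S : Finset ((ℕ × ℕ) × (ℤ × ℤ))) (d : (ℕ × ℕ) × (ℤ × ℤ) → ℂ),
      (∀ lk ∈ S, (lk.1.1 + lk.1.2) % 2 = (j + 1) % 2) ∧
      pb f χ₀ = fun P Q p q => ∑ lk ∈ S, d lk * monom lk.1 lk.2 P Q p q) ∧
    (∃ (S : Finset ((ℕ × ℕ) × (ℤ × ℤ))) (d : (ℕ × ℕ) × (ℤ × ℤ) → ℂ),
      (∀ lk ∈ S, (lk.1.1 + lk.1.2) % 2 = j % 2) ∧
      pb f χ₁ = fun P Q p q => ∑ lk ∈ S, d lk * monom lk.1 lk.2 P Q p q) := by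
  subst hf hχ₀ hχ₁
  constructor
  · have : Good ((j + 1) % 2)
        (pb (fun P Q p q => ∑ lk ∈ Sf, c lk * monom lk.1 lk.2 P Q p q)
            (fun P Q p q => ∑ k ∈ Sχ₀, x₀ k * monom (0, 0) k P Q p q)) := by
      rw [pb_sums Sf Sχ₀ c x₀ (fun lk => lk.1) (fun lk => lk.2) (fun _ => (0, 0)) (fun k => k)]
      exact good_sum _ _ fun i hi => good_sum _ _ fun jx _ =>
        good_const_mul _ (good_pb_trig j i.1 i.2 jx (hfpar i hi))
    exact this
  · have : Good (j % 2)
        (pb (fun P Q p q => ∑ lk ∈ Sf, c lk * monom lk.1 lk.2 P Q p q)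
            (fun P Q p q => ∑ lk ∈ Sχ₁, x₁ lk * monom lk.1 lk.2 P Q p q)) := by
      rw [pb_sums Sf Sχ₁ c x₁ (fun lk => lk.1) (fun lk => lk.2) (fun lk => lk.1) (fun lk => lk.2)]
      exact good_sum _ _ fun i hi => good_sum _ _ fun jx hjx =>
        good_const_mul _ (good_pb_deg1 j i.1 jx.1 i.2 jx.2 (hfpar i hi) (hχ₁deg jx hjx))
    exact this
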